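/- LOO oracle inequality for VC classes under 0–1 loss: Let n ≥ 9, d ≥ 1, and let ℋ be a finite class of functions from {x_1,…,x_n} to {0,1} whose VC dimension is at most d. Run Median of Level-Set Aggregation with tolerance grid 𝒯 = {1,…,⌈24 d ln n⌉}: for each i ∈ {1,…,n} and t ∈ 𝒯 set ŷ_{t,i} = 1 if Σ_{h∈ℋ_{t,i}} (2h(x_i) − 1) ≥ 0 and ŷ_{t,i} = 0 otherwise (majority vote over ℋ_{t,i}), and let ŷ_i be any median of {ŷ_{t,i}}_{t∈𝒯}. Then (1/n) Σ_{i=1}^n ℓ(ŷ_i, y_i) ≤ (8/n)·min_{h∈ℋ} L_S(h) + (200/n)·d·ln n. -/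

import Mathlib

open Finset
open scoped Classical

lemma sum_choose_le_pow (n d : ℕ) : ∑ k ∈ Iic d, n.choose k ≤ (n+1)^d := by
  rw [show Iic d = range (d+1) by ext x; simp [Nat.lt_succ_iff]]
  induction d with
  | zero => simp
  | succ d ih =>
    rw [Finset.sum_range_succ]
    have h1 : n.choose (d+1) ≤ n^(d+1) := Nat.choose_le_pow n (d+1)
    have h2 : n^(d+1) ≤ n * (n+1)^d := by
      rw [pow_succ']
      exact Nat.mul_le_mul_left n (Nat.pow_le_pow_left (Nat.le_succ n) d)
    calc ∑ k ∈ range (d+1), n.choose k + n.choose (d+1)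
        ≤ (n+1)^d + n * (n+1)^d := Nat.add_le_add ih (h1.trans h2)
      _ = (n+1)^(d+1) := by ring

lemma sauer_card_le {n d : ℕ} (H : Finset (Fin n → Bool))
    (hVC : ∀ T : Finset (Fin n), T.card = d + 1 →
      ¬ (∀ f : Fin n → Bool, ∃ h ∈ H, ∀ i ∈ T, h i = f i)) :
    H.card ≤ (n+1)^d := by
  classical
  set 𝒜 : Finset (Finset (Fin n)) := H.image (fun h => univ.filter fun i => h i = true) with h𝒜
  have hinj : Set.InjOn (fun h : Fin n → Bool => univ.filter fun i => h i = true) H := by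
    intro h1 _ h2 _ he
    simp only at he
    funext i
    have : (i ∈ univ.filter fun j => h1 j = true) ↔ (i ∈ univ.filter fun j => h2 j = true) := by
      rw [he]
    simp only [mem_filter, mem_univ, true_and] at this
    cases hb1 : h1 i <;> cases hb2 : h2 i <;> simp [hb1, hb2] at this ⊢
  have hcard : 𝒜.card = H.card := Finset.card_image_of_injOn hinj
  have hvc : 𝒜.vcDim ≤ d := by
    rw [Finset.vcDim]
    apply Finset.sup_le
    intro s hs
    rw [Finset.mem_shatterer] at hs
    by_contra hlt
    push_neg at hlt
    obtain ⟨T, hTs, hTcard⟩ := Finset.exists_subset_card_eq (show d+1 ≤ s.card by omega)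
    refine hVC T hTcard ?_
    intro f
    have hsh := hs.mono_right hTs
    obtain ⟨u, hu, huT⟩ := hsh (Finset.filter_subset (fun i => f i = true) T)
    obtain ⟨h, hhH, rfl⟩ := Finset.mem_image.1 hu
    refine ⟨h, hhH, fun i hi => ?_⟩
    have : (i ∈ T ∩ univ.filter fun j => h j = true) ↔ i ∈ T.filter fun j => f j = true := by
      rw [huT]
    simp only [Finset.mem_inter, mem_filter, mem_univ, true_and, hi] at this
    cases hb1 : h i <;> cases hb2 : f i <;> simp [hb1, hb2] at this ⊢
  calc H.card = 𝒜.card := hcard.symm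
    _ ≤ 𝒜.shatterer.card := Finset.card_le_card_shatterer 𝒜
    _ ≤ ∑ k ∈ Iic 𝒜.vcDim, (Fintype.card (Fin n)).choose k := Finset.card_shatterer_le_sum_vcDim
    _ ≤ ∑ k ∈ Iic d, n.choose k := by
        simp only [Fintype.card_fin]
        exact Finset.sum_le_sum_of_subset (Finset.Iic_subset_Iic.2 hvc)
    _ ≤ (n+1)^d := sum_choose_le_pow n d

lemma tele_log (fN : ℕ → ℝ) (N : ℕ) :
    ∑ t ∈ Icc 1 N, (fN (t+1) - fN (t-1)) = (fN (N+1) - fN 1) + (fN N - fN 0) := by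
  have h : ∑ t ∈ Icc 1 N, (fN (t+1) - fN (t-1))
      = ∑ s ∈ range N, (fN (s+2) - fN s) := by
    rw [← Finset.Ico_add_one_right_eq_Icc, Finset.sum_Ico_eq_sum_range]
    simp only [Nat.add_sub_cancel, Nat.succ_sub_one]
    exact Finset.sum_congr rfl fun x _ => by
      rw [show 1+x+1 = x+2 by omega, show 1+x-1 = x by omega]
  rw [h]
  have : ∀ s:ℕ, fN (s+2) - fN s = (fN (s+2) - fN (s+1)) + (fN (s+1) - fN s) := by
    intro s; ring
  simp_rw [this]
  rw [Finset.sum_add_distrib, Finset.sum_range_sub (fun s => fN (s+1)), Finset.sum_range_sub fN]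

lemma convex_aux (x : ℝ) (h1 : 1 ≤ x) (h2 : x ≤ Real.exp 1) : x - 1 ≤ 1.72 * Real.log x := by
  have hx : 0 < x := lt_of_lt_of_le one_pos h1
  have hu0 : 0 ≤ Real.log x := Real.log_nonneg h1
  have hu1 : Real.log x ≤ 1 := by
    rw [← Real.log_exp 1]; exact Real.log_le_log hx h2
  set u := Real.log x with hu
  have hxe : x = Real.exp u := (Real.exp_log hx).symm
  have := convexOn_exp.2 (Set.mem_univ (0:ℝ)) (Set.mem_univ (1:ℝ))
    (by linarith : (0:ℝ) ≤ 1 - u) (by linarith : (0:ℝ) ≤ u) (by ring)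
  simp only [smul_eq_mul, mul_zero, mul_one, zero_add, Real.exp_zero] at this
  have he : Real.exp 1 ≤ 2.7182818286 := le_of_lt Real.exp_one_lt_d9
  rw [hxe]
  nlinarith [this]

set_option maxHeartbeats 2000000


/-- **LOO oracle inequality for VC classes under 0–1 loss.**
`H` is a finite class of binary hypotheses on the `n ≥ 9` sample points (identified with
`Fin n`), of VC dimension at most `d`.  Median of Level-Set Aggregation is run with the
tolerance grid `𝒯 = {1,…,⌈24 d ln n⌉}`: `yhatt t i` is the majority vote over the
leave-one-out level set `ℋ_{t,i}` at the point `i` (predictions viewed as reals via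
`b2r`), and `yhat i` is any median of `{yhatt t i}_{t∈𝒯}`.  Then
`(1/n) ∑ i ℓ(yhat i, y i) ≤ (8/n)·min_{h∈H} LS(h) + (200/n)·d·ln n`. -/
theorem vc_loo_oracle
    {n d : ℕ} (hn : 9 ≤ n) (hd : 1 ≤ d)
    (y : Fin n → Bool)
    (H : Finset (Fin n → Bool)) (hHne : H.Nonempty)
    -- VC dimension at most d: no subset of cardinality d+1 is shattered by H
    (hVC : ∀ T : Finset (Fin n), T.card = d + 1 →
      ¬ (∀ f : Fin n → Bool, ∃ h ∈ H, ∀ i ∈ T, h i = f i))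
    (b2r : Bool → ℝ) (hb2r : ∀ b, b2r b = if b then 1 else 0)
    (ℓ : ℝ → ℝ → ℝ) (hℓ : ∀ a b, ℓ a b = if a = b then 0 else 1)
    (LS : (Fin n → Bool) → ℝ) (hLS : ∀ h, LS h = ∑ i, ℓ (b2r (h i)) (b2r (y i)))
    (LSm : Fin n → (Fin n → Bool) → ℝ)
    (hLSm : ∀ i h, LSm i h = ∑ j ∈ Finset.univ.erase i, ℓ (b2r (h j)) (b2r (y j)))
    (g : Fin n → Bool) (hgH : g ∈ H) (hg : ∀ h ∈ H, LS g ≤ LS h)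
    (gm : Fin n → Fin n → Bool) (hgmH : ∀ i, gm i ∈ H)
    (hgm : ∀ i, ∀ h ∈ H, LSm i (gm i) ≤ LSm i h)
    (Hti : ℝ → Fin n → Finset (Fin n → Bool))
    (hHti : ∀ s i, Hti s i = H.filter fun h => LSm i h ≤ LSm i (gm i) + s)
    (N : ℕ) (hN : N = ⌈24 * (d : ℝ) * Real.log n⌉₊)
    -- majority vote over the leave-one-out level set
    (yhatt : ℕ → Fin n → ℝ)
    (hyhatt : ∀ (t : ℕ) (i : Fin n), yhatt t i =
      if 0 ≤ ∑ h ∈ Hti (t : ℝ) i, (2 * b2r (h i) - 1) then 1 else 0)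
    -- yhat i is a median of {yhatt t i}_{t ∈ 𝒯}
    (yhat : Fin n → ℝ)
    (hmed : ∀ i : Fin n, ∀ c : ℝ,
      ∑ t ∈ Finset.Icc 1 N, |yhatt t i - yhat i| ≤ ∑ t ∈ Finset.Icc 1 N, |yhatt t i - c|) :
    (1 / (n : ℝ)) * ∑ i, ℓ (yhat i) (b2r (y i))
      ≤ (8 / (n : ℝ)) * LS g + (200 / (n : ℝ)) * (d : ℝ) * Real.log n := by
  classical
  have hn0 : (0:ℝ) < n := by positivity
  -- pointwise loss
  set lo : (Fin n → Bool) → Fin n → ℝ := fun h i => ℓ (b2r (h i)) (b2r (y i)) with hlo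
  have hlo01 : ∀ h i, lo h i = 0 ∨ lo h i = 1 := by
    intro h i; simp only [hlo, hℓ]; split_ifs <;> simp
  have hlo0 : ∀ h i, 0 ≤ lo h i := by
    intro h i; rcases hlo01 h i with h' | h' <;> rw [h'] <;> norm_num
  have hlo1 : ∀ h i, lo h i ≤ 1 := by
    intro h i; rcases hlo01 h i with h' | h' <;> rw [h'] <;> norm_num
  have hsplit : ∀ (i : Fin n) h, LS h = LSm i h + lo h i := by
    intro i h
    rw [hLS, hLSm, hlo]
    exact (Finset.sum_erase_add _ _ (mem_univ i)).symm
  have hLSm_le : ∀ (i : Fin n) h, LSm i h ≤ LS h := by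
    intro i h; rw [hsplit i h]; linarith [hlo0 h i]
  have hLS0 : ∀ h, 0 ≤ LS h := by
    intro h; rw [hLS]; exact Finset.sum_nonneg fun i _ => hlo0 h i
  -- level sets
  set A : ℕ → Finset (Fin n → Bool) := fun s => H.filter (fun h => LS h ≤ LS g + s) with hA
  have hgA : ∀ s, g ∈ A s := by
    intro s
    simp only [hA, mem_filter]
    exact ⟨hgH, by have : (0:ℝ) ≤ (s:ℝ) := Nat.cast_nonneg s; linarith⟩
  have hA1 : ∀ s, (1:ℝ) ≤ (A s).card := by
    intro s
    have := Finset.card_pos.2 ⟨g, hgA s⟩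
    exact_mod_cast this
  have hAH : ∀ s, (A s).card ≤ H.card := fun s => Finset.card_le_card (Finset.filter_subset _ _)
  have hAmono : ∀ s s', s ≤ s' → A s ⊆ A s' := by
    intro s s' hss h hh
    simp only [hA, mem_filter] at hh ⊢
    refine ⟨hh.1, hh.2.trans ?_⟩
    have : (s:ℝ) ≤ (s':ℝ) := by exact_mod_cast hss
    linarith
  -- inclusion into Hti
  have hgm_le : ∀ i : Fin n, LSm i (gm i) + 1 ≥ LS g := by
    intro i
    have h1 : LS g ≤ LS (gm i) := hg _ (hgmH i)
    have h2 : LS (gm i) = LSm i (gm i) + lo (gm i) i := hsplit i (gm i)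
    have := hlo1 (gm i) i
    linarith
  have hSA : ∀ t : ℕ, 1 ≤ t → ∀ i : Fin n, A (t-1) ⊆ Hti (t:ℝ) i := by
    intro t ht i h hh
    simp only [hA, mem_filter] at hh
    rw [hHti, mem_filter]
    refine ⟨hh.1, ?_⟩
    have hc : ((t-1:ℕ):ℝ) = (t:ℝ) - 1 := by
      have : (1:ℕ) ≤ t := ht
      push_cast [Nat.cast_sub this]
      ring
    have h1 : LSm i h ≤ LS h := hLSm_le i h
    have h2 := hgm_le i
    rw [hc] at hh
    linarith [hh.2]
  have hAwr : ∀ t : ℕ, ∀ i : Fin n, ∀ h ∈ Hti (t:ℝ) i, lo h i ≠ 0 → h ∈ A (t+1) := by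
    intro t i h hh hwr
    have hlo1' : lo h i = 1 := (hlo01 h i).resolve_left hwr
    rw [hHti, mem_filter] at hh
    simp only [hA, mem_filter]
    refine ⟨hh.1, ?_⟩
    have h1 : LS h = LSm i h + 1 := by rw [hsplit i h, hlo1']
    have h2 : LSm i (gm i) ≤ LSm i g := hgm i g hgH
    have h3 : LSm i g ≤ LS g := hLSm_le i g
    push_cast
    linarith [hh.2]
  -- W sums
  set W : ℕ → Fin n → ℝ := fun s i => ∑ h ∈ A s, lo h i with hW
  have hW0 : ∀ s i, 0 ≤ W s i := fun s i => Finset.sum_nonneg fun h _ => hlo0 h i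
  have hsumW : ∀ s : ℕ, ∑ i, W s i ≤ ((A s).card : ℝ) * (LS g + s) := by
    intro s
    rw [Finset.sum_comm]
    have : ∀ h ∈ A s, ∑ i, lo h i ≤ LS g + s := by
      intro h hh
      simp only [hA, mem_filter] at hh
      rw [← hLS h]
      exact hh.2
    calc ∑ h ∈ A s, ∑ i, lo h i ≤ ∑ h ∈ A s, (LS g + s) := Finset.sum_le_sum this
      _ = ((A s).card : ℝ) * (LS g + s) := by rw [Finset.sum_const, nsmul_eq_mul]
  -- majority claim
  have hmaj : ∀ t ∈ Icc 1 N, ∀ i : Fin n,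
      ℓ (yhatt t i) (b2r (y i)) * ((A (t-1)).card : ℝ) ≤ W (t+1) i + W (t-1) i := by
    intro t ht i
    rw [Finset.mem_Icc] at ht
    by_cases he : ℓ (yhatt t i) (b2r (y i)) = 0
    · rw [he, zero_mul]
      exact add_nonneg (hW0 _ i) (hW0 _ i)
    · have he1 : ℓ (yhatt t i) (b2r (y i)) = 1 := by
        have h01 : ℓ (yhatt t i) (b2r (y i)) = 0 ∨ ℓ (yhatt t i) (b2r (y i)) = 1 := by
          rw [hℓ]; split_ifs <;> simp
        exact h01.resolve_left he
      rw [he1, one_mul]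
      set S := Hti (t:ℝ) i with hS
      set WrS := ∑ h ∈ S, lo h i with hWrS
      -- wrong part of S is inside A (t+1)
      have hWrS_le : WrS ≤ W (t+1) i := by
        rw [hWrS, ← Finset.sum_filter_ne_zero]
        apply Finset.sum_le_sum_of_subset_of_nonneg
        · intro h hh
          rw [Finset.mem_filter] at hh
          exact hAwr t i h hh.1 hh.2
        · intro h _ _; exact hlo0 h i
      -- the vote is at most 2*WrS - |S|
      have hvote : (S.card : ℝ) ≤ 2 * WrS := by
        have hyt := hyhatt t i
        rw [← hS] at hyt
        by_cases hy : y i = true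
        · -- v = 1, error means yhatt ≠ 1, so vote < 0
          have hv : b2r (y i) = 1 := by rw [hb2r, hy]; norm_num
          have hne : yhatt t i ≠ 1 := by
            intro hcon
            rw [hℓ, hcon, hv] at he1
            simp at he1
          have hneg : ¬ (0 ≤ ∑ h ∈ S, (2 * b2r (h i) - 1)) := by
            intro hcon
            rw [hyt, if_pos hcon] at hne
            exact hne rfl
          push_neg at hneg
          have hid : ∀ h ∈ S, 2 * b2r (h i) - 1 = 1 - 2 * lo h i := by
            intro h _
            simp only [hlo, hℓ, hb2r, hy]
            cases hb : h i <;> norm_num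
          rw [Finset.sum_congr rfl hid, Finset.sum_sub_distrib] at hneg
          simp only [Finset.sum_const, nsmul_eq_mul, mul_one, ← Finset.mul_sum] at hneg
          rw [← hWrS] at hneg
          linarith
        · -- v = 0, error means yhatt = 1, so vote ≥ 0
          have hyf : y i = false := by
            simp only [Bool.not_eq_true] at hy; exact hy
          have hv : b2r (y i) = 0 := by rw [hb2r, hyf]; norm_num
          have hne : yhatt t i ≠ 0 := by
            intro hcon
            rw [hℓ, hcon, hv] at he1
            simp at he1
          have hpos : (0 ≤ ∑ h ∈ S, (2 * b2r (h i) - 1)) := by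
            by_contra hcon
            rw [hyt, if_neg hcon] at hne
            exact hne rfl
          have hid : ∀ h ∈ S, 2 * b2r (h i) - 1 = 2 * lo h i - 1 := by
            intro h _
            simp only [hlo, hℓ, hb2r, hyf]
            cases hb : h i <;> norm_num
          rw [Finset.sum_congr rfl hid, Finset.sum_sub_distrib] at hpos
          simp only [Finset.sum_const, nsmul_eq_mul, mul_one, ← Finset.mul_sum] at hpos
          rw [← hWrS] at hpos
          linarith
      -- right part of A(t-1) is inside right part of S
      have hsub := hSA t ht.1 i
      rw [← hS] at hsub
      have hRS : ((A (t-1)).card : ℝ) - W (t-1) i ≤ (S.card : ℝ) - WrS := by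
        have h1 : ∑ h ∈ A (t-1), (1 - lo h i) ≤ ∑ h ∈ S, (1 - lo h i) := by
          apply Finset.sum_le_sum_of_subset_of_nonneg hsub
          intro h _ _
          linarith [hlo1 h i]
        rw [Finset.sum_sub_distrib, Finset.sum_sub_distrib] at h1
        simp only [Finset.sum_const, nsmul_eq_mul, mul_one] at h1
        rw [hW] at *
        simp only [← hWrS] at h1
        convert h1 using 2 <;> rfl
      linarith
  -- generic loss value facts
  have hl0 : ∀ a b : ℝ, 0 ≤ ℓ a b := by
    intro a b; rw [hℓ]; split_ifs <;> norm_num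
  have hl1 : ∀ a b : ℝ, ℓ a b ≤ 1 := by
    intro a b; rw [hℓ]; split_ifs <;> norm_num
  set Nr : ℝ := (N:ℝ) with hNr
  set E : ℕ → ℝ := fun t => ∑ i, ℓ (yhatt t i) (b2r (y i)) with hE
  have hC0 : (0:ℝ) ≤ LS g + Nr + 1 := by
    have := hLS0 g
    have : (0:ℝ) ≤ Nr := by positivity
    linarith [hLS0 g]
  -- per-t bound
  have hEcard : ∀ t ∈ Icc 1 N, E t * ((A (t-1)).card : ℝ) ≤
      (((A (t+1)).card : ℝ) + ((A (t-1)).card : ℝ)) * (LS g + Nr + 1) := by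
    intro t ht
    have htN := (Finset.mem_Icc.1 ht)
    have h1 : E t * ((A (t-1)).card : ℝ)
        = ∑ i, ℓ (yhatt t i) (b2r (y i)) * ((A (t-1)).card : ℝ) := by
      rw [hE, Finset.sum_mul]
    have h2 : ∑ i, ℓ (yhatt t i) (b2r (y i)) * ((A (t-1)).card : ℝ)
        ≤ ∑ i, (W (t+1) i + W (t-1) i) := Finset.sum_le_sum fun i _ => hmaj t ht i
    have h3 : ∑ i, (W (t+1) i + W (t-1) i) = (∑ i, W (t+1) i) + ∑ i, W (t-1) i :=
      Finset.sum_add_distrib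
    have h4 := hsumW (t+1)
    have h5 := hsumW (t-1)
    have hc1 : ((t+1:ℕ):ℝ) ≤ Nr + 1 := by
      rw [hNr]; push_cast
      have : (t:ℝ) ≤ (N:ℝ) := Nat.cast_le.2 htN.2
      linarith
    have hc2 : ((t-1:ℕ):ℝ) ≤ Nr + 1 := by
      rw [hNr]
      have : (t-1:ℕ) ≤ N + 1 := by omega
      exact_mod_cast this
    have ha1 : (0:ℝ) ≤ ((A (t+1)).card : ℝ) := Nat.cast_nonneg _
    have ha2 : (0:ℝ) ≤ ((A (t-1)).card : ℝ) := Nat.cast_nonneg _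
    have h6 : ((A (t+1)).card : ℝ) * (LS g + ((t+1:ℕ):ℝ)) ≤ ((A (t+1)).card : ℝ) * (LS g + Nr + 1) := by
      apply mul_le_mul_of_nonneg_left _ ha1
      linarith
    have h7 : ((A (t-1)).card : ℝ) * (LS g + ((t-1:ℕ):ℝ)) ≤ ((A (t-1)).card : ℝ) * (LS g + Nr + 1) := by
      apply mul_le_mul_of_nonneg_left _ ha2
      linarith
    calc E t * ((A (t-1)).card : ℝ) = _ := h1
      _ ≤ ∑ i, (W (t+1) i + W (t-1) i) := h2
      _ = (∑ i, W (t+1) i) + ∑ i, W (t-1) i := h3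
      _ ≤ ((A (t+1)).card : ℝ) * (LS g + ((t+1:ℕ):ℝ)) + ((A (t-1)).card : ℝ) * (LS g + ((t-1:ℕ):ℝ)) :=
          add_le_add h4 h5
      _ ≤ ((A (t+1)).card : ℝ) * (LS g + Nr + 1) + ((A (t-1)).card : ℝ) * (LS g + Nr + 1) :=
          add_le_add h6 h7
      _ = (((A (t+1)).card : ℝ) + ((A (t-1)).card : ℝ)) * (LS g + Nr + 1) := by ring
  -- log quantities
  set D : ℝ := Real.log (H.card : ℝ) with hD
  have hH1 : (1:ℝ) ≤ (H.card : ℝ) := by exact_mod_cast Finset.card_pos.2 hHne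
  have hD0 : 0 ≤ D := Real.log_nonneg hH1
  set f : ℕ → ℝ := fun s => Real.log ((A s).card : ℝ) with hf
  have hf0 : ∀ s, 0 ≤ f s := fun s => Real.log_nonneg (hA1 s)
  have hfD : ∀ s, f s ≤ D := by
    intro s
    apply Real.log_le_log (by linarith [hA1 s])
    exact_mod_cast hAH s
  have hfmono : ∀ s s', s ≤ s' → f s ≤ f s' := by
    intro s s' hss
    apply Real.log_le_log (by linarith [hA1 s])
    exact_mod_cast Finset.card_le_card (hAmono s s' hss)
  have hlr0 : ∀ t : ℕ, 0 ≤ f (t+1) - f (t-1) := by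
    intro t
    have := hfmono (t-1) (t+1) (by omega)
    linarith
  have htele : ∑ t ∈ Icc 1 N, (f (t+1) - f (t-1)) ≤ 2 * D := by
    rw [tele_log f N]
    have := hfD (N+1); have := hfD N; have := hf0 1; have := hf0 0
    linarith
  -- good and bad tolerances
  set G : Finset ℕ := (Icc 1 N).filter
    (fun t => ((A (t+1)).card : ℝ) ≤ Real.exp 1 * ((A (t-1)).card : ℝ)) with hG
  set Bad : Finset ℕ := (Icc 1 N).filter
    (fun t => ¬ (((A (t+1)).card : ℝ) ≤ Real.exp 1 * ((A (t-1)).card : ℝ))) with hBad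
  have hBadcard : (Bad.card : ℝ) ≤ 2 * D := by
    have h1 : ∀ t ∈ Bad, (1:ℝ) ≤ f (t+1) - f (t-1) := by
      intro t htB
      rw [hBad, Finset.mem_filter] at htB
      push_neg at htB
      have hgt := htB.2
      have ha2 : (0:ℝ) < ((A (t-1)).card : ℝ) := by linarith [hA1 (t-1)]
      have : Real.log (Real.exp 1 * ((A (t-1)).card : ℝ)) ≤ f (t+1) := by
        apply Real.log_le_log (by positivity)
        linarith
      rw [Real.log_mul (Real.exp_ne_zero 1) (ne_of_gt ha2), Real.log_exp] at this
      linarith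
    have h2 : (Bad.card : ℝ) * 1 ≤ ∑ t ∈ Bad, (f (t+1) - f (t-1)) := by
      rw [mul_one]
      calc (Bad.card : ℝ) = ∑ _t ∈ Bad, (1:ℝ) := by rw [Finset.sum_const, nsmul_eq_mul, mul_one]
        _ ≤ ∑ t ∈ Bad, (f (t+1) - f (t-1)) := Finset.sum_le_sum h1
    have h3 : ∑ t ∈ Bad, (f (t+1) - f (t-1)) ≤ ∑ t ∈ Icc 1 N, (f (t+1) - f (t-1)) := by
      apply Finset.sum_le_sum_of_subset_of_nonneg (Finset.filter_subset _ _)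
      intro t _ _; exact hlr0 t
    linarith
  -- bound on good tolerances
  have hEgood : ∀ t ∈ G, E t ≤ (2 + 1.72 * (f (t+1) - f (t-1))) * (LS g + Nr + 1) := by
    intro t htG
    rw [hG, Finset.mem_filter] at htG
    obtain ⟨htI, hte⟩ := htG
    set a : ℝ := ((A (t-1)).card : ℝ) with ha
    set a' : ℝ := ((A (t+1)).card : ℝ) with ha'
    have ha1 : (1:ℝ) ≤ a := hA1 _
    have ha0 : (0:ℝ) < a := by linarith
    have haa' : a ≤ a' := by
      rw [ha, ha']
      exact_mod_cast Finset.card_le_card (hAmono (t-1) (t+1) (by omega))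
    have hρ1 : 1 ≤ a' / a := (le_div_iff₀ ha0).2 (by linarith)
    have hρe : a' / a ≤ Real.exp 1 := (div_le_iff₀ ha0).2 (by linarith)
    have hconv := convex_aux (a' / a) hρ1 hρe
    have ha'0 : (0:ℝ) < a' := lt_of_lt_of_le ha0 haa'
    have hlogρ : Real.log (a' / a) = f (t+1) - f (t-1) :=
      Real.log_div (ne_of_gt ha'0) (ne_of_gt ha0)
    have hE1 : E t ≤ (a' / a + 1) * (LS g + Nr + 1) := by
      have hcan : a' / a * a = a' := div_mul_cancel₀ a' (ne_of_gt ha0)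
      have hkey : E t * a ≤ ((a' / a + 1) * (LS g + Nr + 1)) * a := by
        have h2 : ((a' / a + 1) * (LS g + Nr + 1)) * a = (a' + a) * (LS g + Nr + 1) := by
          linear_combination (LS g + Nr + 1) * hcan
        rw [h2]; exact hEcard t htI
      exact le_of_mul_le_mul_right hkey ha0
    have hfac : a' / a + 1 ≤ 2 + 1.72 * (f (t+1) - f (t-1)) := by
      rw [← hlogρ]; linarith
    calc E t ≤ (a' / a + 1) * (LS g + Nr + 1) := hE1
      _ ≤ (2 + 1.72 * (f (t+1) - f (t-1))) * (LS g + Nr + 1) :=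
          mul_le_mul_of_nonneg_right hfac hC0
  have hGsum : ∑ t ∈ G, E t ≤ (2 * Nr + 1.72 * (2 * D)) * (LS g + Nr + 1) := by
    have h1 : ∑ t ∈ G, E t ≤ ∑ t ∈ G, (2 + 1.72 * (f (t+1) - f (t-1))) * (LS g + Nr + 1) :=
      Finset.sum_le_sum hEgood
    have h2 : ∑ t ∈ G, (2 + 1.72 * (f (t+1) - f (t-1))) * (LS g + Nr + 1)
        = (∑ t ∈ G, (2 + 1.72 * (f (t+1) - f (t-1)))) * (LS g + Nr + 1) := by
      rw [Finset.sum_mul]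
    have h3 : ∑ t ∈ G, (2 + 1.72 * (f (t+1) - f (t-1)))
        ≤ 2 * Nr + 1.72 * (2 * D) := by
      rw [Finset.sum_add_distrib, Finset.sum_const, ← Finset.mul_sum]
      have hc : (G.card : ℝ) ≤ Nr := by
        have h5 : G.card ≤ (Icc 1 N).card :=
          Finset.card_le_card (by rw [hG]; exact Finset.filter_subset _ _)
        rw [Nat.card_Icc] at h5
        have h4 : G.card ≤ N := by omega
        rw [hNr]; exact_mod_cast h4
      have hGsub : G ⊆ Icc 1 N := by rw [hG]; exact Finset.filter_subset _ _
      have hs : ∑ t ∈ G, (f (t+1) - f (t-1)) ≤ 2 * D := by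
        refine le_trans ?_ htele
        apply Finset.sum_le_sum_of_subset_of_nonneg hGsub
        intro t _ _; exact hlr0 t
      rw [nsmul_eq_mul]
      linarith [hc, hs]
    calc ∑ t ∈ G, E t ≤ _ := h1
      _ = _ := h2
      _ ≤ (2 * Nr + 1.72 * (2 * D)) * (LS g + Nr + 1) := mul_le_mul_of_nonneg_right h3 hC0
  -- median claim
  have habs : ∀ (t : ℕ) (i : Fin n), |yhatt t i - b2r (y i)| = ℓ (yhatt t i) (b2r (y i)) := by
    intro t i
    rw [hyhatt t i, hb2r]
    split_ifs with h1 h2 h2 <;> norm_num [hℓ]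
  have hmedkey : ∀ i : Fin n,
      ℓ (yhat i) (b2r (y i)) * (Nr/2 - (Bad.card:ℝ)) ≤ ∑ t ∈ G, ℓ (yhatt t i) (b2r (y i)) := by
    intro i
    by_cases hz : ℓ (yhat i) (b2r (y i)) = 0
    · rw [hz, zero_mul]
      exact Finset.sum_nonneg fun t _ => hl0 _ _
    · have he1 : ℓ (yhat i) (b2r (y i)) = 1 := by
        have h01 : ℓ (yhat i) (b2r (y i)) = 0 ∨ ℓ (yhat i) (b2r (y i)) = 1 := by
          rw [hℓ]; split_ifs <;> simp
        exact h01.resolve_left hz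
      rw [he1, one_mul]
      have hyne : yhat i ≠ b2r (y i) := by
        intro hcon
        rw [hℓ, if_pos hcon] at he1
        norm_num at he1
      set v : ℝ := b2r (y i) with hv
      set δ : ℝ := |yhat i - v| with hδdef
      have hδ : 0 < δ := abs_pos.2 (sub_ne_zero.2 hyne)
      set m : ℝ := ∑ t ∈ Icc 1 N, ℓ (yhatt t i) v with hm
      have hm0 : 0 ≤ m := Finset.sum_nonneg fun t _ => hl0 _ _
      have hlow : ∀ t ∈ Icc 1 N, δ + ℓ (yhatt t i) v * (1 - 2*δ) ≤ |yhatt t i - yhat i| := by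
        intro t _
        have h01 : ℓ (yhatt t i) v = 0 ∨ ℓ (yhatt t i) v = 1 := by
          rw [hℓ]; split_ifs <;> simp
        rcases h01 with h0 | h1
        · rw [h0]
          have heq : yhatt t i = v := by
            have := habs t i
            rw [← hv] at this
            rw [h0] at this
            have := abs_eq_zero.1 this
            linarith [sub_eq_zero.1 this]
          rw [heq]
          rw [abs_sub_comm]
          rw [← hδdef]
          linarith
        · rw [h1]
          have habs1 : |yhatt t i - v| = 1 := by rw [habs t i]; exact h1
          have htri : |yhatt t i - v| ≤ |yhatt t i - yhat i| + |yhat i - v| := abs_sub_le _ _ _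
          rw [habs1, ← hδdef] at htri
          linarith
      have hsum1 : ∑ t ∈ Icc 1 N, (δ + ℓ (yhatt t i) v * (1 - 2*δ))
          ≤ ∑ t ∈ Icc 1 N, |yhatt t i - yhat i| := Finset.sum_le_sum hlow
      have hsum2 : ∑ t ∈ Icc 1 N, |yhatt t i - yhat i| ≤ ∑ t ∈ Icc 1 N, |yhatt t i - v| :=
        hmed i v
      have hsum3 : ∑ t ∈ Icc 1 N, |yhatt t i - v| = m := by
        rw [hm]
        exact Finset.sum_congr rfl fun t _ => habs t i
      have hsum4 : ∑ t ∈ Icc 1 N, (δ + ℓ (yhatt t i) v * (1 - 2*δ)) = Nr * δ + m * (1 - 2*δ) := by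
        rw [Finset.sum_add_distrib, Finset.sum_const, nsmul_eq_mul, ← Finset.sum_mul, ← hm,
          Nat.card_Icc, Nat.add_sub_cancel, hNr]
      have hNm : Nr ≤ 2 * m := by
        by_contra hcon
        push_neg at hcon
        nlinarith [hδ, hsum1, hsum2, hsum3, hsum4]
      have hsplitsum : ∑ t ∈ G, ℓ (yhatt t i) v + ∑ t ∈ Bad, ℓ (yhatt t i) v = m := by
        rw [hG, hBad, hm]
        exact Finset.sum_filter_add_sum_filter_not _ _ _
      have hBadsum : ∑ t ∈ Bad, ℓ (yhatt t i) v ≤ (Bad.card:ℝ) := by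
        calc ∑ t ∈ Bad, ℓ (yhatt t i) v ≤ ∑ _t ∈ Bad, (1:ℝ) :=
              Finset.sum_le_sum (fun t _ => hl1 _ _)
          _ = (Bad.card:ℝ) := by rw [Finset.sum_const, nsmul_eq_mul, mul_one]
      linarith
  -- assembling
  set Stot : ℝ := ∑ i, ℓ (yhat i) (b2r (y i)) with hStot
  have hStot0 : 0 ≤ Stot := Finset.sum_nonneg fun i _ => hl0 _ _
  have hKey : (Nr/2 - (Bad.card:ℝ)) * Stot ≤ ∑ t ∈ G, E t := by
    have h1 : ∑ i, ℓ (yhat i) (b2r (y i)) * (Nr/2 - (Bad.card:ℝ))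
        ≤ ∑ i, ∑ t ∈ G, ℓ (yhatt t i) (b2r (y i)) := Finset.sum_le_sum fun i _ => hmedkey i
    rw [Finset.sum_comm, ← Finset.sum_mul] at h1
    rw [mul_comm]
    rw [hStot]
    refine le_trans h1 (le_of_eq ?_)
    exact Finset.sum_congr rfl fun t _ => by rw [hE]
  -- numeric facts
  have hlogn : (2:ℝ) ≤ Real.log n := by
    rw [Real.le_log_iff_exp_le hn0]
    have h9 : (9:ℝ) ≤ n := by exact_mod_cast hn
    have h2 : Real.exp 2 = Real.exp 1 * Real.exp 1 := by rw [← Real.exp_add]; norm_num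
    have h1 : Real.exp 1 ≤ 2.7182818286 := le_of_lt Real.exp_one_lt_d9
    nlinarith [Real.exp_pos 1]
  have hd1 : (1:ℝ) ≤ (d:ℝ) := by exact_mod_cast hd
  set M : ℝ := (d:ℝ) * Real.log n with hM
  have hM2 : 2 ≤ M := by nlinarith
  have hDM : D ≤ (19/18) * M := by
    have hsauer : H.card ≤ (n+1)^d := sauer_card_le H hVC
    have h1 : D ≤ Real.log (((n:ℝ)+1)^d) := by
      rw [hD]
      apply Real.log_le_log (by linarith)
      have : ((H.card : ℕ) : ℝ) ≤ (((n+1)^d : ℕ) : ℝ) := by exact_mod_cast hsauer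
      calc (H.card : ℝ) ≤ (((n+1)^d : ℕ) : ℝ) := this
        _ = ((n:ℝ)+1)^d := by push_cast; ring
    rw [Real.log_pow] at h1
    have h2 : Real.log ((n:ℝ)+1) ≤ Real.log n + 1/9 := by
      have h3 : Real.log (((n:ℝ)+1)/n) ≤ ((n:ℝ)+1)/n - 1 :=
        Real.log_le_sub_one_of_pos (by positivity)
      rw [Real.log_div (by positivity) (ne_of_gt hn0)] at h3
      have h4 : ((n:ℝ)+1)/n - 1 = 1/n := by field_simp; ring
      have h9 : (9:ℝ) ≤ n := by exact_mod_cast hn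
      have h5 : (1:ℝ)/n ≤ 1/9 := by
        apply one_div_le_one_div_of_le <;> linarith
      linarith
    have hd9 : (d:ℝ)/9 ≤ M/18 := by rw [hM]; nlinarith
    calc D ≤ (d:ℝ) * Real.log ((n:ℝ)+1) := h1
      _ ≤ (d:ℝ) * (Real.log n + 1/9) := by
          apply mul_le_mul_of_nonneg_left h2 (by linarith)
      _ = M + (d:ℝ)/9 := by rw [hM]; ring
      _ ≤ M + M/18 := by linarith
      _ = (19/18)*M := by ring
  have hNlow : 24 * M ≤ Nr := by
    rw [hNr, hN, hM]
    have h1 := Nat.le_ceil (24*(d:ℝ)*Real.log n)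
    linarith [h1]
  have hNhigh : Nr ≤ 24 * M + 1 := by
    rw [hNr, hN, hM]
    have h0 : (0:ℝ) ≤ 24*(d:ℝ)*Real.log n := by nlinarith
    have h1 := Nat.ceil_lt_add_one h0
    linarith [h1]
  have hBadM : (Bad.card:ℝ) ≤ (19/9)*M := le_trans hBadcard (by linarith)
  have hKpos : (89/9) * M ≤ Nr/2 - (Bad.card:ℝ) := by linarith
  have hmain : (Nr/2 - (Bad.card:ℝ)) * Stot ≤ (2*Nr + 1.72*(2*D)) * (LS g + Nr + 1) :=
    le_trans hKey hGsum
  have hL0 := hLS0 g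
  have hfinal : Stot ≤ 8 * LS g + 200 * M := by
    have h1 : 2*Nr + 1.72*(2*D) ≤ 53*M := by linarith
    have h2 : LS g + Nr + 1 ≤ LS g + 25*M := by linarith
    have h3 : (0:ℝ) ≤ LS g + Nr + 1 := hC0
    have h4 : (0:ℝ) ≤ 53*M := by linarith
    have hRHS : (2*Nr + 1.72*(2*D)) * (LS g + Nr + 1) ≤ (53*M) * (LS g + 25*M) :=
      mul_le_mul h1 h2 h3 h4
    have h5 : (89/9)*M*Stot ≤ (53*M)*(LS g + 25*M) := by
      have h6 := mul_le_mul_of_nonneg_right hKpos hStot0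
      linarith
    have hM0 : (0:ℝ) < M := by linarith
    nlinarith [h5, mul_nonneg (le_of_lt hM0) hL0, mul_nonneg (le_of_lt hM0) hStot0,
      mul_pos hM0 hM0]
  have hgoal : (1/(n:ℝ)) * Stot ≤ (1/(n:ℝ)) * (8 * LS g + 200 * M) :=
    mul_le_mul_of_nonneg_left hfinal (by positivity)
  refine le_trans hgoal (le_of_eq ?_)
  rw [hM]
  field_simp
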